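/- Let Σ be a Riemannian or Lorentzian surface with rotation operator J satisfying J² = -ε₁ε₂·id and ⟨Ju,Jv⟩ = ε₁ε₂⟨u,v⟩, and let ν₁, ν₂, ν₃ be smooth functions with ε₁ν₁² + ε₂ν₂² + ε₃ν₃² = ε₃. Define X₁ = J∇ν₁ + ε₂ε₃(ν₃∇ν₂ - ν₂∇ν₃), X₂ = J∇ν₂ + ε₃ε₁(ν₁∇ν₃ - ν₃∇ν₁), X₃ = J∇ν₃ + ε₁ε₂(ν₂∇ν₁ - ν₁∇ν₂). Then (ε_β - ε₃ν_β²)⟨X_α, X_α⟩ = (ε_α - ε₃ν_α²)⟨X_β, X_β⟩ for all α, β ∈ {1,2,3}. -/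
import Mathlib

set_option maxHeartbeats 1000000

/-- Lemma 3.2(a): with Xᵢ = J∇νᵢ + εᵢ₊₁εᵢ₊₂(νᵢ₊₂∇νᵢ₊₁ - νᵢ₊₁∇νᵢ₊₂) one has
(ε_β - ε₃ν_β²)⟨X_α,X_α⟩ = (ε_α - ε₃ν_α²)⟨X_β,X_β⟩ for all α, β. Indices run over Fin 3
(so `2 : Fin 3` plays the role of the index 3). The surface is modeled by a chart ℝ² with
metric field `g`, gradients `G i` characterized by dνᵢ(v) = g(Gᵢ, v), and rotation field
`J` with J² = -ε₁ε₂·id and ⟨Ju,Jv⟩ = ε₁ε₂⟨u,v⟩. -/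
theorem stmt7 (ε : Fin 3 → ℝ) (hε : ∀ i, ε i = 1 ∨ ε i = -1)
    (g : (Fin 2 → ℝ) → (Fin 2 → ℝ) →ₗ[ℝ] (Fin 2 → ℝ) →ₗ[ℝ] ℝ)
    (hgsym : ∀ p u v, g p u v = g p v u)
    (ν : Fin 3 → (Fin 2 → ℝ) → ℝ) (hν : ∀ i, Differentiable ℝ (ν i))
    (G : Fin 3 → (Fin 2 → ℝ) → Fin 2 → ℝ)
    (hG : ∀ i p v, fderiv ℝ (ν i) p v = g p (G i p) v)
    (hsphere : ∀ p, ∑ i, ε i * (ν i p) ^ 2 = ε 2)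
    (J : (Fin 2 → ℝ) → (Fin 2 → ℝ) →ₗ[ℝ] (Fin 2 → ℝ))
    (hJsq : ∀ p v, J p (J p v) = -((ε 0 * ε 1) • v))
    (hJiso : ∀ p u v, g p (J p u) (J p v) = ε 0 * ε 1 * g p u v)
    (X : Fin 3 → (Fin 2 → ℝ) → Fin 2 → ℝ)
    (hX : ∀ i p, X i p = J p (G i p) +
      (ε (i + 1) * ε (i + 2)) • ((ν (i + 2) p) • G (i + 1) p - (ν (i + 1) p) • G (i + 2) p)) :
    ∀ p, ∀ α β : Fin 3,
      (ε β - ε 2 * (ν β p) ^ 2) * g p (X α p) (X α p) =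
        (ε α - ε 2 * (ν α p) ^ 2) * g p (X β p) (X β p) := by
  intro p α β
  have he : ∀ i : Fin 3, ε i ^ 2 = 1 := fun i => by rcases hε i with h | h <;> rw [h] <;> norm_num
  have hsph : ε 0 * ν 0 p ^ 2 + ε 1 * ν 1 p ^ 2 + ε 2 * ν 2 p ^ 2 = ε 2 := by
    simpa [Fin.sum_univ_three] using hsphere p
  have hL : ∀ v, ε 0 * ν 0 p * g p (G 0 p) v + ε 1 * ν 1 p * g p (G 1 p) v
      + ε 2 * ν 2 p * g p (G 2 p) v = 0 := by
    have hd : ∀ i : Fin 3, HasFDerivAt (fun q => ε i * (ν i q * ν i q))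
        ((ε i) • ((ν i p) • fderiv ℝ (ν i) p + (ν i p) • fderiv ℝ (ν i) p)) p :=
      fun i => ((hν i p).hasFDerivAt.mul (hν i p).hasFDerivAt).const_mul (ε i)
    have hsum := ((hd 0).add (hd 1)).add (hd 2)
    have hconst : HasFDerivAt (fun q => ε 0 * (ν 0 q * ν 0 q) + ε 1 * (ν 1 q * ν 1 q) + ε 2 * (ν 2 q * ν 2 q))
        (0 : (Fin 2 → ℝ) →L[ℝ] ℝ) p := by
      have hfun : (fun q => ε 0 * (ν 0 q * ν 0 q) + ε 1 * (ν 1 q * ν 1 q) + ε 2 * (ν 2 q * ν 2 q))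
          = fun _ => ε 2 := funext fun q => by
        have hq := hsphere q
        simp only [Fin.sum_univ_three, pow_two] at hq
        linarith
      rw [hfun]; exact hasFDerivAt_const _ _
    have h0 := hsum.unique hconst
    intro v
    have h0v := congrArg (fun (L : (Fin 2 → ℝ) →L[ℝ] ℝ) => L v) h0
    simp only [ContinuousLinearMap.add_apply, ContinuousLinearMap.smul_apply,
      ContinuousLinearMap.zero_apply, smul_eq_mul, hG] at h0v
    linear_combination h0v / 2
  have hanti : ∀ u v, g p (J p u) v = - g p u (J p v) := by
    intro u v
    have h1 := hJiso p u (J p v)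
    rw [hJsq p v] at h1
    simp only [map_neg, map_smul, smul_eq_mul] at h1
    linear_combination (-(ε 0 * ε 1)) * h1
      - (ε 1 ^ 2 * (g p (J p u) v + g p u (J p v))) * (he 0)
      - (g p (J p u) v + g p u (J p v)) * (he 1)
  have hX0 : X 0 p = J p (G 0 p) + (ε 1 * ε 2) • ((ν 2 p) • G 1 p - (ν 1 p) • G 2 p) := by
    simpa using hX 0 p
  have hX1 : X 1 p = J p (G 1 p) + (ε 2 * ε 0) • ((ν 0 p) • G 2 p - (ν 2 p) • G 0 p) := by
    simpa using hX 1 p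
  have hX2 : X 2 p = J p (G 2 p) + (ε 0 * ε 1) • ((ν 1 p) • G 0 p - (ν 0 p) • G 1 p) := by
    simpa using hX 2 p
  have hE0 : g p (X 0 p) (X 0 p) = g p (J p (G 0 p)) (J p (G 0 p)) + ε 1 * ε 2 * (ν 2 p * g p (J p (G 0 p)) (G 1 p) - ν 1 p * g p (J p (G 0 p)) (G 2 p)) + ε 1 * ε 2 * (ν 2 p * g p (G 1 p) (J p (G 0 p)) - ν 1 p * g p (G 2 p) (J p (G 0 p))) + ν 2 p ^ 2 * g p (G 1 p) (G 1 p) - ν 1 p * ν 2 p * (g p (G 1 p) (G 2 p) + g p (G 2 p) (G 1 p)) + ν 1 p ^ 2 * g p (G 2 p) (G 2 p) := by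
    rw [hX0]
    simp only [map_add, map_sub, map_smul, LinearMap.add_apply, LinearMap.sub_apply,
      LinearMap.smul_apply, smul_eq_mul]
    linear_combination ((ν 2 p ^ 2 * g p (G 1 p) (G 1 p) - ν 1 p * ν 2 p * (g p (G 1 p) (G 2 p) + g p (G 2 p) (G 1 p)) + ν 1 p ^ 2 * g p (G 2 p) (G 2 p)) * ε 2 ^ 2) * (he 1) + (ν 2 p ^ 2 * g p (G 1 p) (G 1 p) - ν 1 p * ν 2 p * (g p (G 1 p) (G 2 p) + g p (G 2 p) (G 1 p)) + ν 1 p ^ 2 * g p (G 2 p) (G 2 p)) * (he 2)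
  have hE1 : g p (X 1 p) (X 1 p) = g p (J p (G 1 p)) (J p (G 1 p)) + ε 2 * ε 0 * (ν 0 p * g p (J p (G 1 p)) (G 2 p) - ν 2 p * g p (J p (G 1 p)) (G 0 p)) + ε 2 * ε 0 * (ν 0 p * g p (G 2 p) (J p (G 1 p)) - ν 2 p * g p (G 0 p) (J p (G 1 p))) + ν 0 p ^ 2 * g p (G 2 p) (G 2 p) - ν 2 p * ν 0 p * (g p (G 2 p) (G 0 p) + g p (G 0 p) (G 2 p)) + ν 2 p ^ 2 * g p (G 0 p) (G 0 p) := by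
    rw [hX1]
    simp only [map_add, map_sub, map_smul, LinearMap.add_apply, LinearMap.sub_apply,
      LinearMap.smul_apply, smul_eq_mul]
    linear_combination ((ν 0 p ^ 2 * g p (G 2 p) (G 2 p) - ν 2 p * ν 0 p * (g p (G 2 p) (G 0 p) + g p (G 0 p) (G 2 p)) + ν 2 p ^ 2 * g p (G 0 p) (G 0 p)) * ε 0 ^ 2) * (he 2) + (ν 0 p ^ 2 * g p (G 2 p) (G 2 p) - ν 2 p * ν 0 p * (g p (G 2 p) (G 0 p) + g p (G 0 p) (G 2 p)) + ν 2 p ^ 2 * g p (G 0 p) (G 0 p)) * (he 0)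
  have hE2 : g p (X 2 p) (X 2 p) = g p (J p (G 2 p)) (J p (G 2 p)) + ε 0 * ε 1 * (ν 1 p * g p (J p (G 2 p)) (G 0 p) - ν 0 p * g p (J p (G 2 p)) (G 1 p)) + ε 0 * ε 1 * (ν 1 p * g p (G 0 p) (J p (G 2 p)) - ν 0 p * g p (G 1 p) (J p (G 2 p))) + ν 1 p ^ 2 * g p (G 0 p) (G 0 p) - ν 0 p * ν 1 p * (g p (G 0 p) (G 1 p) + g p (G 1 p) (G 0 p)) + ν 0 p ^ 2 * g p (G 1 p) (G 1 p) := by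
    rw [hX2]
    simp only [map_add, map_sub, map_smul, LinearMap.add_apply, LinearMap.sub_apply,
      LinearMap.smul_apply, smul_eq_mul]
    linear_combination ((ν 1 p ^ 2 * g p (G 0 p) (G 0 p) - ν 0 p * ν 1 p * (g p (G 0 p) (G 1 p) + g p (G 1 p) (G 0 p)) + ν 0 p ^ 2 * g p (G 1 p) (G 1 p)) * ε 1 ^ 2) * (he 0) + (ν 1 p ^ 2 * g p (G 0 p) (G 0 p) - ν 0 p * ν 1 p * (g p (G 0 p) (G 1 p) + g p (G 1 p) (G 0 p)) + ν 0 p ^ 2 * g p (G 1 p) (G 1 p)) * (he 1)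
  have h01 : (ε 1 - ε 2 * ν 1 p ^ 2) * g p (X 0 p) (X 0 p) = (ε 0 - ε 2 * ν 0 p ^ 2) * g p (X 1 p) (X 1 p) := by
    linear_combination (norm := ring_nf) (ε 1 - ε 2 * ν 1 p ^ 2) * hE0 - (ε 0 - ε 2 * ν 0 p ^ 2) * hE1 + (1 * ε 0 * ε 2 * ν 0 p) * (hL (G 0 p)) + (1 * ε 0 * ε 2 * ν 0 p * ν 2 p * ν 2 p) * (hL (G 0 p)) + ((-1) * ε 1 * ε 2 * ν 1 p) * (hL (G 1 p)) + ((-1) * ε 1 * ε 2 * ν 1 p * ν 2 p * ν 2 p) * (hL (G 1 p)) + ((-1) * ν 2 p) * (hL (G 2 p)) + (1 * ν 2 p * ν 2 p * ν 2 p) * (hL (G 2 p)) + (2 * ε 1 * ε 2 * ν 1 p * ν 1 p * ν 2 p) * (hL (G 2 p)) + ((-2) * ν 1 p * ν 2 p) * (hL (J p (G 0 p))) + ((-2) * ν 0 p * ν 2 p) * (hL (J p (G 1 p))) + (2 * ν 0 p * ν 1 p) * (hL (J p (G 2 p))) + (1 * ε 0 * ν 0 p * ν 1 p * ν 2 p)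 * (hanti (G 0 p) (G 0 p)) + (1 * ε 2 * ν 2 p) * (hanti (G 0 p) (G 1 p)) + ((-1) * ε 1 * ν 1 p * ν 1 p * ν 2 p) * (hanti (G 0 p) (G 1 p)) + ((-1) * ε 2 * ν 1 p) * (hanti (G 0 p) (G 2 p)) + (1 * ε 1 * ν 1 p * ν 1 p * ν 1 p) * (hanti (G 0 p) (G 2 p)) + (1 * ε 2 * ν 2 p) * (hanti (G 1 p) (G 0 p)) + (1 * ε 1 * ν 1 p * ν 1 p * ν 2 p) * (hanti (G 1 p) (G 0 p)) + (1 * ε 1 * ν 0 p * ν 1 p * ν 2 p) * (hanti (G 1 p) (G 1 p)) + ((-1) * ε 2 * ν 0 p * ν 2 p * ν 2 p) * (hanti (G 1 p) (G 2 p)) + ((-1) * ε 1 * ν 0 p * ν 1 p * ν 1 p) * (hanti (G 1 p) (G 2 p)) + ((-1) * ε 2 * ν 1 p) * (hanti (G 2 p) (G 0 p)) + (2 * ε 2 * ν 1 p * ν 2 p * ν 2 p) * (hanti (G 2 p) (G 0 p)) + (1 * ε 1 * ν 1 p * ν 1 p * ν 1 p) * (hanti (G 2 p) (G 0 p)) +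 (1 * ε 2 * ν 0 p * ν 2 p * ν 2 p) * (hanti (G 2 p) (G 1 p)) + ((-1) * ε 1 * ν 0 p * ν 1 p * ν 1 p) * (hanti (G 2 p) (G 1 p)) + ((-1) * ε 2 * ν 0 p * ν 1 p * ν 2 p) * (hanti (G 2 p) (G 2 p)) + (1 * ε 1) * (hJiso p (G 0 p) (G 0 p)) + ((-1) * ε 2 * ν 1 p * ν 1 p) * (hJiso p (G 0 p) (G 0 p)) + ((-1) * ε 0 * ν 2 p * ν 2 p) * (hJiso p (G 1 p) (G 1 p)) + ((-1) * ε 0 * ε 1 * ε 2 * ν 1 p * ν 1 p) * (hJiso p (G 1 p) (G 1 p)) + (1 * ε 0 * ε 2 * (g p (J p (G 1 p)) (J p (G 1 p)))) * (hsph) + ((-1) * ε 0 * ε 2 * (g p (G 0 p) (G 0 p))) * (hsph) + ((-1) * ν 2 p * (g p (J p (G 1 p)) (G 0 p))) * (hsph) + (1 * ν 2 p * (g p (G 0 p) (J p (G 1 p)))) * (hsph) + ((-1) * ν 2 p * ν 2 p * (g p (G 2 p) (G 2 p))) * (hsph) + ((-2) * ν 1 p * (g p (G 0 p) (J p (G 2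 p)))) * (hsph) + ((-1) * ε 1 * ε 2 * ν 1 p * ν 1 p * (g p (G 2 p) (G 2 p))) * (hsph) + (1 * ν 0 p * (g p (J p (G 1 p)) (G 2 p))) * (hsph) + (1 * ν 0 p * (g p (G 2 p) (J p (G 1 p)))) * (hsph) + ((-1) * ε 0 * ε 2 * ν 0 p * ν 2 p * (g p (G 0 p) (G 2 p))) * (hsph) + ((-1) * ε 0 * ε 2 * ν 0 p * ν 2 p * (g p (G 2 p) (G 0 p))) * (hsph) + (1 * ε 0 * ε 2 * ν 0 p * ν 0 p * (g p (G 2 p) (G 2 p))) * (hsph) + (1 * ε 0 * ε 1 * ε 2 * ν 0 p * ν 1 p) * (hgsym p (G 0 p) (G 1 p)) + (1 * ε 0 * ε 1 * ε 2 * ν 0 p * ν 1 p * ν 2 p * ν 2 p) * (hgsym p (G 0 p) (G 1 p)) + (1 * ε 0 * ν 0 p * ν 2 p) * (hgsym p (G 0 p) (G 2 p)) + ((-1) * ε 0 * ε 1 * ε 2 * ν 0 p * ν 1 p * ν 1 p * ν 2 p) * (hgsym p (G 0 p) (G 2 p)) + ((-1) * ε 1 * ν 1 p * ν 2 p * ν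 2 p * ν 2 p) * (hgsym p (G 1 p) (G 2 p)) + ((-1) * ε 2 * ν 1 p * ν 1 p * ν 1 p * ν 2 p) * (hgsym p (G 1 p) (G 2 p)) + (1 * ε 0 * ν 0 p * ν 1 p * ν 2 p) * (hgsym p (G 0 p) (J p (G 0 p))) + (1 * ε 2 * ν 2 p) * (hgsym p (G 0 p) (J p (G 1 p))) + ((-1) * ε 2 * ν 2 p * ν 2 p * ν 2 p) * (hgsym p (G 0 p) (J p (G 1 p))) + ((-1) * ε 2 * ν 1 p) * (hgsym p (G 0 p) (J p (G 2 p))) + (2 * ε 2 * ν 1 p * ν 2 p * ν 2 p) * (hgsym p (G 0 p) (J p (G 2 p))) + (1 * ε 1 * ν 1 p * ν 1 p * ν 1 p) * (hgsym p (G 0 p) (J p (G 2 p))) + (1 * ε 1 * ν 0 p * ν 1 p * ν 2 p) * (hgsym p (G 1 p) (J p (G 1 p))) + (1 * ε 2 * ν 0 p * ν 2 p * ν 2 p) * (hgsym p (G 1 p) (J p (G 2 p))) + ((-1) * ε 1 * ν 0 p * ν 1 p * ν 1 p) * (hgsym p (G 1 p) (J p (G 2 p))) + ((-1) * ε 2 *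 ν 0 p * ν 1 p * ν 2 p) * (hgsym p (G 2 p) (J p (G 2 p))) + (1 * ε 2 * ν 2 p * (g p (J p (G 1 p)) (G 0 p))) * (he 0) + (1 * ε 2 * ν 2 p * (g p (G 0 p) (J p (G 1 p)))) * (he 0) + ((-1) * ε 2 * ν 0 p * (g p (J p (G 1 p)) (G 2 p))) * (he 0) + ((-1) * ε 2 * ν 0 p * (g p (G 2 p) (J p (G 1 p)))) * (he 0) + ((-1) * ε 2 * ν 0 p * ν 0 p * (g p (J p (G 1 p)) (J p (G 1 p)))) * (he 0) + ((-1) * ε 2 * ν 0 p * ν 0 p * ν 2 p * ν 2 p * (g p (G 0 p) (G 0 p))) * (he 0) + (1 * ε 2 * ν 0 p * ν 0 p * ν 0 p * ν 2 p * (g p (G 0 p) (G 2 p))) * (he 0) + (1 * ε 2 * ν 0 p * ν 0 p * ν 0 p * ν 2 p * (g p (G 2 p) (G 0 p))) * (he 0) + ((-1) * ε 2 * ν 0 p * ν 0 p * ν 0 p * ν 0 p * (g p (G 2 p) (G 2 p))) * (he 0) + ((-1) * ε 1 * ν 2 p * ν 2 p * (g p (G 1 p) (G 1 p))) * (he 0)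 + ((-1) * ε 1 * ε 1 * ε 2 * ν 1 p * ν 1 p * (g p (G 1 p) (G 1 p))) * (he 0) + (1 * ε 2 * ν 2 p * (g p (J p (G 0 p)) (G 1 p))) * (he 1) + (1 * ε 2 * ν 2 p * (g p (G 1 p) (J p (G 0 p)))) * (he 1) + ((-1) * ε 2 * ν 1 p * (g p (J p (G 0 p)) (G 2 p))) * (he 1) + ((-1) * ε 2 * ν 1 p * (g p (G 2 p) (J p (G 0 p)))) * (he 1) + (1 * ε 2 * ν 1 p * ν 1 p * ν 2 p * ν 2 p * (g p (G 1 p) (G 1 p))) * (he 1) + ((-2) * ε 2 * ν 1 p * ν 1 p * ν 1 p * ν 2 p * (g p (G 1 p) (G 2 p))) * (he 1) + (1 * ε 2 * ν 1 p * ν 1 p * ν 1 p * ν 1 p * (g p (G 2 p) (G 2 p))) * (he 1) + (1 * ε 0 * (g p (G 0 p) (G 0 p))) * (he 1) + (1 * ε 1 * ν 1 p * ν 2 p * (g p (G 2 p) (G 1 p))) * (he 2) + (1 * ε 1 * ν 1 p * ν 2 p * ν 2 p * ν 2 p * (g p (G 2 p) (G 1 p))) * (he 2) + ((-1) * ε 1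 * ν 1 p * ν 1 p * (g p (G 2 p) (G 2 p))) * (he 2) + ((-1) * ε 1 * ν 1 p * ν 1 p * ν 2 p * (g p (J p (G 0 p)) (G 1 p))) * (he 2) + ((-1) * ε 1 * ν 1 p * ν 1 p * ν 2 p * (g p (G 1 p) (J p (G 0 p)))) * (he 2) + ((-1) * ε 1 * ν 1 p * ν 1 p * ν 2 p * ν 2 p * (g p (G 2 p) (G 2 p))) * (he 2) + (1 * ε 1 * ν 1 p * ν 1 p * ν 1 p * (g p (J p (G 0 p)) (G 2 p))) * (he 2) + (1 * ε 1 * ν 1 p * ν 1 p * ν 1 p * (g p (G 2 p) (J p (G 0 p)))) * (he 2) + ((-1) * ε 0 * (g p (G 0 p) (G 0 p))) * (he 2) + (1 * ε 0 * (g p (J p (G 1 p)) (J p (G 1 p)))) * (he 2) + (1 * ε 0 * ν 2 p * ν 2 p * (g p (G 0 p) (G 0 p))) * (he 2) + ((-1) * ε 0 * ν 2 p * ν 2 p * (g p (J p (G 1 p)) (J p (G 1 p)))) * (he 2) + ((-1) * ε 0 * ν 0 p * ν 2 p * (g p (G 0 p) (G 2 p))) * (he 2) + ((-2) * ε 0 *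 ν 0 p * ν 2 p * (g p (G 2 p) (G 0 p))) * (he 2) + (1 * ε 0 * ν 0 p * ν 2 p * ν 2 p * ν 2 p * (g p (G 0 p) (G 2 p))) * (he 2) + (1 * ε 0 * ν 0 p * ν 0 p * (g p (G 2 p) (G 2 p))) * (he 2) + ((-1) * ε 0 * ν 0 p * ν 0 p * ν 2 p * (g p (J p (G 1 p)) (G 0 p))) * (he 2) + ((-1) * ε 0 * ν 0 p * ν 0 p * ν 2 p * (g p (G 0 p) (J p (G 1 p)))) * (he 2) + ((-1) * ε 0 * ν 0 p * ν 0 p * ν 2 p * ν 2 p * (g p (G 2 p) (G 2 p))) * (he 2) + (1 * ε 0 * ν 0 p * ν 0 p * ν 0 p * (g p (J p (G 1 p)) (G 2 p))) * (he 2) + (1 * ε 0 * ν 0 p * ν 0 p * ν 0 p * (g p (G 2 p) (J p (G 1 p)))) * (he 2)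
  have h02 : (ε 2 - ε 2 * ν 2 p ^ 2) * g p (X 0 p) (X 0 p) = (ε 0 - ε 2 * ν 0 p ^ 2) * g p (X 2 p) (X 2 p) := by
    linear_combination (norm := ring_nf) (ε 2 - ε 2 * ν 2 p ^ 2) * hE0 - (ε 0 - ε 2 * ν 0 p ^ 2) * hE2 + (1 * ε 0 * ε 1 * ν 0 p) * (hL (G 0 p)) + (1 * ε 0 * ε 2 * ν 0 p * ν 1 p * ν 1 p) * (hL (G 0 p)) + ((-1) * ν 1 p) * (hL (G 1 p)) + (2 * ν 1 p * ν 2 p * ν 2 p) * (hL (G 1 p)) + (1 * ε 1 * ε 2 * ν 1 p * ν 1 p * ν 1 p) * (hL (G 1 p)) + ((-1) * ε 1 * ε 2 * ν 2 p) * (hL (G 2 p)) + ((-1) * ν 1 p * ν 1 p * ν 2 p) * (hL (G 2 p)) + (2 * ε 1 * ε 2 * ν 1 p * ν 2 p) * (hL (J p (G 0 p))) + ((-2) * ε 1 * ε 2 * ν 0 p * ν 2 p) * (hL (J p (G 1 p))) + (2 * ε 1 * ε 2 * ν 0 p * ν 1 p) * (hL (J p (G 2 p))) + ((-1) * ε 0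 * ε 1 * ε 2 * ν 0 p * ν 1 p * ν 2 p) * (hanti (G 0 p) (G 0 p)) + (1 * ε 1 * ν 2 p) * (hanti (G 0 p) (G 1 p)) + ((-1) * ε 1 * ν 2 p * ν 2 p * ν 2 p) * (hanti (G 0 p) (G 1 p)) + ((-1) * ε 1 * ν 1 p) * (hanti (G 0 p) (G 2 p)) + (1 * ε 1 * ν 1 p * ν 2 p * ν 2 p) * (hanti (G 0 p) (G 2 p)) + (1 * ε 1 * ν 2 p) * (hanti (G 1 p) (G 0 p)) + ((-1) * ε 1 * ν 2 p * ν 2 p * ν 2 p) * (hanti (G 1 p) (G 0 p)) + ((-2) * ε 2 * ν 1 p * ν 1 p * ν 2 p) * (hanti (G 1 p) (G 0 p)) + (1 * ε 2 * ν 0 p * ν 1 p * ν 2 p) * (hanti (G 1 p) (G 1 p)) + ((-1) * ε 1 * ν 1 p) * (hanti (G 2 p) (G 0 p)) + ((-1) * ε 1 * ν 1 p * ν 2 p * ν 2 p) * (hanti (G 2 p) (G 0 p)) + (2 * ε 1 * ν 0 p * ν 2 p * ν 2 p) * (hanti (G 2 p) (G 1 p)) + ((-1) * ε 1 * ν 0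 p * ν 1 p * ν 2 p) * (hanti (G 2 p) (G 2 p)) + (1 * ε 2) * (hJiso p (G 0 p) (G 0 p)) + ((-1) * ε 2 * ν 2 p * ν 2 p) * (hJiso p (G 0 p) (G 0 p)) + ((-1) * ε 0 * ν 2 p * ν 2 p) * (hJiso p (G 2 p) (G 2 p)) + ((-1) * ε 0 * ε 1 * ε 2 * ν 1 p * ν 1 p) * (hJiso p (G 2 p) (G 2 p)) + (1 * ε 0 * ε 2 * (g p (J p (G 2 p)) (J p (G 2 p)))) * (hsph) + ((-1) * ε 0 * ε 1 * (g p (G 0 p) (G 0 p))) * (hsph) + (2 * ε 1 * ε 2 * ν 2 p * (g p (G 0 p) (J p (G 1 p)))) * (hsph) + ((-1) * ν 2 p * ν 2 p * (g p (G 1 p) (G 1 p))) * (hsph) + (1 * ε 1 * ε 2 * ν 1 p * (g p (J p (G 2 p)) (G 0 p))) * (hsph) + ((-1) * ε 1 * ε 2 * ν 1 p * (g p (G 0 p) (J p (G 2 p)))) * (hsph) + ((-1) * ε 1 * ε 2 * ν 1 p * ν 1 p * (g p (G 1 p) (G 1 p))) * (hsph) + ((-1) * ε 1 * ε 2 * ν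 0 p * (g p (J p (G 2 p)) (G 1 p))) * (hsph) + ((-1) * ε 1 * ε 2 * ν 0 p * (g p (G 1 p) (J p (G 2 p)))) * (hsph) + ((-1) * ε 0 * ε 2 * ν 0 p * ν 1 p * (g p (G 0 p) (G 1 p))) * (hsph) + ((-1) * ε 0 * ε 2 * ν 0 p * ν 1 p * (g p (G 1 p) (G 0 p))) * (hsph) + (1 * ε 0 * ε 2 * ν 0 p * ν 0 p * (g p (G 1 p) (G 1 p))) * (hsph) + (1 * ε 0 * ν 0 p * ν 1 p) * (hgsym p (G 0 p) (G 1 p)) + ((-1) * ε 0 * ν 0 p * ν 1 p * ν 2 p * ν 2 p) * (hgsym p (G 0 p) (G 1 p)) + (1 * ε 0 * ε 1 * ε 2 * ν 0 p * ν 2 p) * (hgsym p (G 0 p) (G 2 p)) + (1 * ε 0 * ν 0 p * ν 1 p * ν 1 p * ν 2 p) * (hgsym p (G 0 p) (G 2 p)) + (1 * ε 2 * ν 1 p * ν 2 p * ν 2 p * ν 2 p) * (hgsym p (G 1 p) (G 2 p)) + (1 * ε 1 * ν 1 p * ν 1 p * ν 1 p * ν 2 p) * (hgsym p (G 1 p)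 (G 2 p)) + ((-1) * ε 0 * ε 1 * ε 2 * ν 0 p * ν 1 p * ν 2 p) * (hgsym p (G 0 p) (J p (G 0 p))) + (1 * ε 1 * ν 2 p) * (hgsym p (G 0 p) (J p (G 1 p))) + ((-1) * ε 1 * ν 2 p * ν 2 p * ν 2 p) * (hgsym p (G 0 p) (J p (G 1 p))) + ((-2) * ε 2 * ν 1 p * ν 1 p * ν 2 p) * (hgsym p (G 0 p) (J p (G 1 p))) + ((-1) * ε 1 * ν 1 p) * (hgsym p (G 0 p) (J p (G 2 p))) + (1 * ε 2 * ν 1 p * ν 1 p * ν 1 p) * (hgsym p (G 0 p) (J p (G 2 p))) + (1 * ε 2 * ν 0 p * ν 1 p * ν 2 p) * (hgsym p (G 1 p) (J p (G 1 p))) + (1 * ε 1 * ν 0 p * ν 2 p * ν 2 p) * (hgsym p (G 1 p) (J p (G 2 p))) + ((-1) * ε 2 * ν 0 p * ν 1 p * ν 1 p) * (hgsym p (G 1 p) (J p (G 2 p))) + ((-1) * ε 1 * ν 0 p * ν 1 p * ν 2 p) * (hgsym p (G 2 p) (J p (G 2 p))) + ((-1) * ε 2 * ν 0 p * ν 0 p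 * (g p (J p (G 2 p)) (J p (G 2 p)))) * (he 0) + ((-1) * ε 2 * ν 0 p * ν 0 p * ν 1 p * ν 1 p * (g p (G 0 p) (G 0 p))) * (he 0) + (1 * ε 2 * ν 0 p * ν 0 p * ν 0 p * ν 1 p * (g p (G 0 p) (G 1 p))) * (he 0) + (1 * ε 2 * ν 0 p * ν 0 p * ν 0 p * ν 1 p * (g p (G 1 p) (G 0 p))) * (he 0) + ((-1) * ε 2 * ν 0 p * ν 0 p * ν 0 p * ν 0 p * (g p (G 1 p) (G 1 p))) * (he 0) + ((-1) * ε 1 * ν 2 p * ν 2 p * (g p (G 2 p) (G 2 p))) * (he 0) + ((-1) * ε 1 * ν 1 p * (g p (J p (G 2 p)) (G 0 p))) * (he 0) + ((-1) * ε 1 * ν 1 p * (g p (G 0 p) (J p (G 2 p)))) * (he 0) + (1 * ε 1 * ν 0 p * (g p (J p (G 2 p)) (G 1 p))) * (he 0) + (1 * ε 1 * ν 0 p * (g p (G 1 p) (J p (G 2 p)))) * (he 0) + ((-1) * ε 1 * ε 1 * ε 2 * ν 1 p * ν 1 p * (g p (G 2 p) (G 2 p))) * (he 0) + (1 * ε 2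 * ν 1 p * ν 2 p * (g p (G 1 p) (G 2 p))) * (he 1) + ((-1) * ε 2 * ν 1 p * ν 1 p * (g p (G 2 p) (G 2 p))) * (he 1) + ((-2) * ε 2 * ν 1 p * ν 1 p * ν 2 p * (g p (G 0 p) (J p (G 1 p)))) * (he 1) + ((-2) * ε 2 * ν 1 p * ν 1 p * ν 2 p * (g p (G 1 p) (J p (G 0 p)))) * (he 1) + ((-1) * ε 2 * ν 1 p * ν 1 p * ν 1 p * (g p (J p (G 2 p)) (G 0 p))) * (he 1) + (1 * ε 2 * ν 1 p * ν 1 p * ν 1 p * (g p (G 0 p) (J p (G 2 p)))) * (he 1) + (2 * ε 2 * ν 0 p * ν 1 p * ν 2 p * (g p (G 1 p) (J p (G 1 p)))) * (he 1) + (1 * ε 2 * ν 0 p * ν 1 p * ν 1 p * (g p (J p (G 2 p)) (G 1 p))) * (he 1) + ((-1) * ε 2 * ν 0 p * ν 1 p * ν 1 p * (g p (G 1 p) (J p (G 2 p)))) * (he 1) + (1 * ε 0 * ν 1 p * ν 1 p * (g p (G 0 p) (G 0 p))) * (he 1) + ((-1) * ε 0 * ν 0 p * ν 1 p * (g p (G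 1 p) (G 0 p))) * (he 1) + (1 * ε 1 * ν 2 p * (g p (J p (G 0 p)) (G 1 p))) * (he 2) + (2 * ε 1 * ν 2 p * (g p (G 0 p) (J p (G 1 p)))) * (he 2) + (1 * ε 1 * ν 2 p * (g p (G 1 p) (J p (G 0 p)))) * (he 2) + (1 * ε 1 * ν 2 p * ν 2 p * (g p (G 2 p) (G 2 p))) * (he 2) + ((-1) * ε 1 * ν 2 p * ν 2 p * ν 2 p * (g p (J p (G 0 p)) (G 1 p))) * (he 2) + ((-2) * ε 1 * ν 2 p * ν 2 p * ν 2 p * (g p (G 0 p) (J p (G 1 p)))) * (he 2) + ((-1) * ε 1 * ν 2 p * ν 2 p * ν 2 p * (g p (G 1 p) (J p (G 0 p)))) * (he 2) + ((-1) * ε 1 * ν 1 p * (g p (J p (G 0 p)) (G 2 p))) * (he 2) + (1 * ε 1 * ν 1 p * (g p (J p (G 2 p)) (G 0 p))) * (he 2) + ((-1) * ε 1 * ν 1 p * (g p (G 0 p) (J p (G 2 p)))) * (he 2) + ((-1) * ε 1 * ν 1 p * (g p (G 2 p) (J p (G 0 p)))) * (he 2) + (1 * ε 1 * ν 1 p *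 ν 2 p * ν 2 p * (g p (J p (G 0 p)) (G 2 p))) * (he 2) + ((-1) * ε 1 * ν 1 p * ν 2 p * ν 2 p * (g p (J p (G 2 p)) (G 0 p))) * (he 2) + (1 * ε 1 * ν 1 p * ν 2 p * ν 2 p * (g p (G 0 p) (J p (G 2 p)))) * (he 2) + ((-1) * ε 1 * ν 1 p * ν 2 p * ν 2 p * (g p (G 2 p) (J p (G 0 p)))) * (he 2) + ((-1) * ε 1 * ν 1 p * ν 1 p * (g p (G 1 p) (G 1 p))) * (he 2) + (1 * ε 1 * ν 1 p * ν 1 p * ν 2 p * ν 2 p * (g p (G 1 p) (G 1 p))) * (he 2) + ((-1) * ε 1 * ν 1 p * ν 1 p * ν 1 p * ν 2 p * (g p (G 2 p) (G 1 p))) * (he 2) + ((-1) * ε 1 * ν 0 p * (g p (J p (G 2 p)) (G 1 p))) * (he 2) + ((-1) * ε 1 * ν 0 p * (g p (G 1 p) (J p (G 2 p)))) * (he 2) + (1 * ε 1 * ν 0 p * ν 2 p * ν 2 p * (g p (J p (G 2 p)) (G 1 p))) * (he 2) + (1 * ε 1 * ν 0 p * ν 2 p * ν 2 p * (g p (G 1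 p) (J p (G 2 p)))) * (he 2) + (2 * ε 1 * ν 0 p * ν 2 p * ν 2 p * (g p (G 2 p) (J p (G 1 p)))) * (he 2) + ((-2) * ε 1 * ν 0 p * ν 1 p * ν 2 p * (g p (G 2 p) (J p (G 2 p)))) * (he 2) + (1 * ε 0 * (g p (J p (G 2 p)) (J p (G 2 p)))) * (he 2) + ((-1) * ε 0 * ν 2 p * ν 2 p * (g p (J p (G 2 p)) (J p (G 2 p)))) * (he 2) + ((-1) * ε 0 * ν 0 p * ν 1 p * (g p (G 0 p) (G 1 p))) * (he 2) + ((-1) * ε 0 * ν 0 p * ν 1 p * (g p (G 1 p) (G 0 p))) * (he 2) + (1 * ε 0 * ν 0 p * ν 1 p * ν 2 p * ν 2 p * (g p (G 0 p) (G 1 p))) * (he 2) + (1 * ε 0 * ν 0 p * ν 1 p * ν 2 p * ν 2 p * (g p (G 1 p) (G 0 p))) * (he 2) + ((-1) * ε 0 * ν 0 p * ν 1 p * ν 1 p * ν 2 p * (g p (G 2 p) (G 0 p))) * (he 2) + (1 * ε 0 * ν 0 p * ν 0 p * (g p (G 1 p) (G 1 p))) * (he 2) + ((-1) * ε 0 *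 ν 0 p * ν 0 p * ν 2 p * ν 2 p * (g p (G 1 p) (G 1 p))) * (he 2)
  have h12 : (ε 2 - ε 2 * ν 2 p ^ 2) * g p (X 1 p) (X 1 p) = (ε 1 - ε 2 * ν 1 p ^ 2) * g p (X 2 p) (X 2 p) := by
    linear_combination (norm := ring_nf) (ε 2 - ε 2 * ν 2 p ^ 2) * hE1 - (ε 1 - ε 2 * ν 1 p ^ 2) * hE2 + (1 * ν 0 p * ν 2 p * ν 2 p) * (hL (G 0 p)) + ((-1) * ε 1 * ε 2 * ν 0 p * ν 1 p * ν 1 p) * (hL (G 0 p)) + (2 * ε 0 * ε 1 * ν 1 p) * (hL (G 1 p)) + ((-1) * ε 0 * ε 1 * ν 1 p * ν 2 p * ν 2 p) * (hL (G 1 p)) + ((-1) * ε 0 * ε 2 * ν 1 p * ν 1 p * ν 1 p) * (hL (G 1 p)) + ((-2) * ε 0 * ε 2 * ν 2 p) * (hL (G 2 p)) + (1 * ε 0 * ε 2 * ν 2 p * ν 2 p * ν 2 p) * (hL (G 2 p)) + (1 * ε 0 * ε 1 * ν 1 p * ν 1 p * ν 2 p) * (hL (G 2 p)) + (2 * ε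 0 * ε 2 * ν 1 p * ν 2 p) * (hL (J p (G 0 p))) + ((-2) * ε 0 * ε 2 * ν 0 p * ν 2 p) * (hL (J p (G 1 p))) + ((-2) * ε 0 * ε 2 * ν 0 p * ν 1 p) * (hL (J p (G 2 p))) + ((-1) * ε 2 * ν 0 p * ν 1 p * ν 2 p) * (hanti (G 0 p) (G 0 p)) + ((-2) * ε 0 * ε 1 * ε 2 * ν 1 p * ν 1 p * ν 2 p) * (hanti (G 1 p) (G 0 p)) + (1 * ε 0 * ε 1 * ε 2 * ν 0 p * ν 1 p * ν 2 p) * (hanti (G 1 p) (G 1 p)) + (1 * ε 0 * ν 0 p) * (hanti (G 1 p) (G 2 p)) + ((-1) * ε 0 * ν 0 p * ν 2 p * ν 2 p) * (hanti (G 1 p) (G 2 p)) + ((-2) * ε 0 * ν 1 p * ν 2 p * ν 2 p) * (hanti (G 2 p) (G 0 p)) + (1 * ε 0 * ν 0 p) * (hanti (G 2 p) (G 1 p)) + (1 * ε 0 * ν 0 p * ν 2 p * ν 2 p) * (hanti (G 2 p) (G 1 p)) + (1 * ε 0 * ν 0 p * ν 1 p * ν 2 p) * (hanti (G 2 p) (G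 2 p)) + (1 * ε 2) * (hJiso p (G 1 p) (G 1 p)) + ((-1) * ε 2 * ν 2 p * ν 2 p) * (hJiso p (G 1 p) (G 1 p)) + ((-1) * ε 1) * (hJiso p (G 2 p) (G 2 p)) + (1 * ε 2 * ν 1 p * ν 1 p) * (hJiso p (G 2 p) (G 2 p)) + ((-1) * ε 0 * ε 1 * (g p (G 1 p) (G 1 p))) * (hsph) + (1 * ε 0 * ε 2 * (g p (G 2 p) (G 2 p))) * (hsph) + (2 * ε 0 * ε 2 * ν 2 p * (g p (G 0 p) (J p (G 1 p)))) * (hsph) + ((-1) * ν 2 p * ν 2 p * (g p (G 0 p) (G 0 p))) * (hsph) + ((-1) * ε 0 * ε 2 * ν 2 p * ν 2 p * (g p (G 2 p) (G 2 p))) * (hsph) + (2 * ε 0 * ε 2 * ν 1 p * (g p (G 0 p) (J p (G 2 p)))) * (hsph) + (1 * ε 1 * ε 2 * ν 1 p * ν 1 p * (g p (G 0 p) (G 0 p))) * (hsph) + (1 * ε 0 * ε 2 * ν 1 p * ν 1 p * (g p (G 1 p) (G 1 p))) * (hsph) + ((-1) * ε 1 * ν 0 p * ν 1 p) * (hgsym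 p (G 0 p) (G 1 p)) + (1 * ε 1 * ν 0 p * ν 1 p * ν 2 p * ν 2 p) * (hgsym p (G 0 p) (G 1 p)) + (1 * ε 2 * ν 0 p * ν 2 p) * (hgsym p (G 0 p) (G 2 p)) + ((-1) * ε 1 * ν 0 p * ν 1 p * ν 1 p * ν 2 p) * (hgsym p (G 0 p) (G 2 p)) + (2 * ε 0 * ε 1 * ε 2 * ν 1 p * ν 2 p) * (hgsym p (G 1 p) (G 2 p)) + ((-1) * ε 0 * ε 1 * ε 2 * ν 1 p * ν 2 p * ν 2 p * ν 2 p) * (hgsym p (G 1 p) (G 2 p)) + ((-1) * ε 0 * ν 1 p * ν 1 p * ν 1 p * ν 2 p) * (hgsym p (G 1 p) (G 2 p)) + ((-1) * ε 2 * ν 0 p * ν 1 p * ν 2 p) * (hgsym p (G 0 p) (J p (G 0 p))) + (1 * ε 0 * ν 2 p) * (hgsym p (G 0 p) (J p (G 1 p))) + ((-1) * ε 0 * ν 2 p * ν 2 p * ν 2 p) * (hgsym p (G 0 p) (J p (G 1 p))) + ((-2) * ε 0 * ε 1 * ε 2 * ν 1 p * ν 1 p * ν 2 p) * (hgsym p (G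 0 p) (J p (G 1 p))) + (1 * ε 0 * ν 1 p) * (hgsym p (G 0 p) (J p (G 2 p))) + ((-2) * ε 0 * ν 1 p * ν 2 p * ν 2 p) * (hgsym p (G 0 p) (J p (G 2 p))) + ((-1) * ε 0 * ε 1 * ε 2 * ν 1 p * ν 1 p * ν 1 p) * (hgsym p (G 0 p) (J p (G 2 p))) + (1 * ε 0 * ε 1 * ε 2 * ν 0 p * ν 1 p * ν 2 p) * (hgsym p (G 1 p) (J p (G 1 p))) + (1 * ε 0 * ν 0 p * ν 2 p * ν 2 p) * (hgsym p (G 1 p) (J p (G 2 p))) + (1 * ε 0 * ε 1 * ε 2 * ν 0 p * ν 1 p * ν 1 p) * (hgsym p (G 1 p) (J p (G 2 p))) + (1 * ε 0 * ν 0 p * ν 1 p * ν 2 p) * (hgsym p (G 2 p) (J p (G 2 p))) + (2 * ε 2 * ν 0 p * ν 2 p * (g p (G 0 p) (G 2 p))) * (he 0) + ((-1) * ε 2 * ν 0 p * ν 2 p * ν 2 p * ν 2 p * (g p (G 0 p) (G 2 p))) * (he 0) + ((-2) * ε 2 * ν 0 p * ν 1 p * ν 2 p * (g p (G 0 p) (J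 p (G 0 p)))) * (he 0) + (1 * ε 2 * ν 0 p * ν 1 p * ν 1 p * ν 1 p * (g p (G 0 p) (G 1 p))) * (he 0) + ((-1) * ε 2 * ν 0 p * ν 0 p * (g p (G 2 p) (G 2 p))) * (he 0) + (1 * ε 2 * ν 0 p * ν 0 p * ν 2 p * ν 2 p * (g p (G 2 p) (G 2 p))) * (he 0) + ((-1) * ε 2 * ν 0 p * ν 0 p * ν 1 p * ν 1 p * (g p (G 1 p) (G 1 p))) * (he 0) + ((-2) * ε 1 * ν 0 p * ν 1 p * (g p (G 0 p) (G 1 p))) * (he 0) + (1 * ε 1 * ν 0 p * ν 1 p * ν 2 p * ν 2 p * (g p (G 0 p) (G 1 p))) * (he 0) + ((-1) * ε 1 * ν 0 p * ν 1 p * ν 1 p * ν 2 p * (g p (G 0 p) (G 2 p))) * (he 0) + (1 * ε 1 * ν 0 p * ν 0 p * (g p (G 1 p) (G 1 p))) * (he 0) + ((-1) * ε 2 * ν 1 p * ν 1 p * ν 1 p * ν 1 p * (g p (G 0 p) (G 0 p))) * (he 1) + (1 * ε 2 * ν 0 p * ν 1 p * ν 1 p * ν 1 p * (g p (G 1 p)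 (G 0 p))) * (he 1) + ((-1) * ε 0 * (g p (G 2 p) (G 2 p))) * (he 1) + ((-1) * ε 0 * ν 1 p * (g p (J p (G 2 p)) (G 0 p))) * (he 1) + ((-1) * ε 0 * ν 1 p * (g p (G 0 p) (J p (G 2 p)))) * (he 1) + ((-1) * ε 0 * ν 1 p * ν 1 p * (g p (G 1 p) (G 1 p))) * (he 1) + (1 * ε 0 * ν 1 p * ν 1 p * ν 2 p * ν 2 p * (g p (G 1 p) (G 1 p))) * (he 1) + ((-1) * ε 0 * ν 1 p * ν 1 p * ν 1 p * ν 2 p * (g p (G 1 p) (G 2 p))) * (he 1) + (1 * ε 0 * ν 0 p * (g p (J p (G 2 p)) (G 1 p))) * (he 1) + (1 * ε 0 * ν 0 p * (g p (G 1 p) (J p (G 2 p)))) * (he 1) + (1 * ε 1 * ν 1 p * ν 1 p * (g p (G 0 p) (G 0 p))) * (he 2) + ((-1) * ε 1 * ν 1 p * ν 1 p * ν 2 p * ν 2 p * (g p (G 0 p) (G 0 p))) * (he 2) + (1 * ε 1 * ν 0 p * ν 1 p * ν 1 p * ν 2 p * (g p (G 2 p) (G 0 p))) * (he 2) + (1 *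 ε 0 * (g p (G 2 p) (G 2 p))) * (he 2) + ((-1) * ε 0 * ν 2 p * (g p (J p (G 1 p)) (G 0 p))) * (he 2) + (1 * ε 0 * ν 2 p * (g p (G 0 p) (J p (G 1 p)))) * (he 2) + (1 * ε 0 * ν 2 p * ν 2 p * ν 2 p * (g p (J p (G 1 p)) (G 0 p))) * (he 2) + ((-1) * ε 0 * ν 2 p * ν 2 p * ν 2 p * (g p (G 0 p) (J p (G 1 p)))) * (he 2) + (2 * ε 0 * ν 1 p * (g p (G 0 p) (J p (G 2 p)))) * (he 2) + ((-2) * ε 0 * ν 1 p * ν 2 p * ν 2 p * (g p (G 0 p) (J p (G 2 p)))) * (he 2) + ((-2) * ε 0 * ν 1 p * ν 2 p * ν 2 p * (g p (G 2 p) (J p (G 0 p)))) * (he 2) + (1 * ε 0 * ν 1 p * ν 1 p * (g p (G 1 p) (G 1 p))) * (he 2) + ((-1) * ε 0 * ν 1 p * ν 1 p * ν 2 p * ν 2 p * (g p (G 1 p) (G 1 p))) * (he 2) + (1 * ε 0 * ν 1 p * ν 1 p * ν 1 p * ν 2 p * (g p (G 2 p) (G 1 p))) * (he 2) + (1 * ε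 0 * ν 0 p * (g p (J p (G 1 p)) (G 2 p))) * (he 2) + (1 * ε 0 * ν 0 p * (g p (G 2 p) (J p (G 1 p)))) * (he 2) + ((-1) * ε 0 * ν 0 p * ν 2 p * ν 2 p * (g p (J p (G 1 p)) (G 2 p))) * (he 2) + (1 * ε 0 * ν 0 p * ν 2 p * ν 2 p * (g p (G 2 p) (J p (G 1 p)))) * (he 2) + (2 * ε 0 * ν 0 p * ν 1 p * ν 2 p * (g p (G 2 p) (J p (G 2 p)))) * (he 2)
  fin_cases α <;> fin_cases β <;>
    first
      | rfl
      | exact h01 | exact h01.symm | exact h02 | exact h02.symm | exact h12 | exact h12.symm
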